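/- Let P₀ be a symmetric positive semidefinite n×n real matrix with eigenvalues σ₁ ≥ ⋯ ≥ σₙ ≥ 0, and let H be any m×n real matrix (m < n) such that H P₀ Hᵀ is invertible. Then ‖P₀ − P₀ Hᵀ (H P₀ Hᵀ)⁻¹ H P₀‖_F² ≥ σ_{m+1}² + ⋯ + σₙ². -/

import Mathlib

open Matrix

lemma card_filter_ge {n m : ℕ} :
    (Finset.univ.filter fun i : Fin n => m ≤ (i : ℕ)).card = n - m := by
  rw [← Nat.card_Ico m n]
  apply Finset.card_bij (fun (i : Fin n) _ => (i : ℕ))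
  · intro a ha; simp at ha ⊢; exact ha
  · intro a _ b _ h; exact Fin.ext h
  · intro b hb; simp at hb; exact ⟨⟨b, hb.2⟩, by simp [hb.1], rfl⟩

lemma trace_psd_nonneg {n : ℕ} {C : Matrix (Fin n) (Fin n) ℝ} (hC : C.PosSemidef) :
    0 ≤ C.trace := by
  rw [Matrix.trace]
  apply Finset.sum_nonneg
  intro i _
  have h := hC.dotProduct_mulVec_nonneg (Pi.single i 1)
  simpa [dotProduct, Matrix.mulVec, Pi.single_apply, Finset.sum_ite_eq,
    Matrix.diag] using h

open scoped MatrixOrder in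
lemma trace_mul_psd_nonneg {n : ℕ} {C D : Matrix (Fin n) (Fin n) ℝ}
    (hC : C.PosSemidef) (hD : D.PosSemidef) : 0 ≤ (C * D).trace := by
  have h1 : C * D = C * (CFC.sqrt D) * (CFC.sqrt D) := by rw [mul_assoc, CFC.sqrt_mul_sqrt_self D hD.nonneg]
  have h2 : (C * D).trace = ((CFC.sqrt D) * C * (CFC.sqrt D)).trace := by
    rw [h1, Matrix.trace_mul_comm, ← mul_assoc]
  rw [h2]
  have hpsd : ((CFC.sqrt D) * C * (CFC.sqrt D)).PosSemidef := by
    have := hC.conjTranspose_mul_mul_same (B := (CFC.sqrt D))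
    rwa [(CFC.sqrt_nonneg D).posSemidef.1.eq] at this
  exact trace_psd_nonneg hpsd

lemma iso_dot {n k : ℕ} {V : Matrix (Fin k) (Fin n) ℝ} (hV : Vᵀ * V = 1)
    (x y : Fin n → ℝ) : (V *ᵥ x) ⬝ᵥ (V *ᵥ y) = x ⬝ᵥ y := by
  rw [Matrix.dotProduct_mulVec, ← Matrix.vecMul_transpose, Matrix.vecMul_vecMul, hV,
    Matrix.vecMul_one]

lemma aux_sum_bound {n m : ℕ} (hmn : m < n) (c t : Fin n → ℝ)
    (hc : Antitone c) (hc0 : ∀ i, 0 ≤ c i)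
    (ht0 : ∀ i, 0 ≤ t i) (ht1 : ∀ i, t i ≤ 1)
    (hsum : ((n - m : ℕ) : ℝ) ≤ ∑ i, t i) :
    ∑ i ∈ Finset.univ.filter (fun i : Fin n => m ≤ (i : ℕ)), c i ≤ ∑ i, c i * t i := by
  classical
  set F := Finset.univ.filter (fun i : Fin n => m ≤ (i : ℕ)) with hF
  set θ := c ⟨m, hmn⟩ with hθ
  have hθ0 : 0 ≤ θ := hc0 _
  have h1 : ∑ i ∈ F, (c i - c i * t i) ≤ ∑ i ∈ F, θ * (1 - t i) := by
    apply Finset.sum_le_sum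
    intro i hi
    have him : m ≤ (i : ℕ) := by
      have := Finset.mem_filter.mp hi; exact this.2
    have hci : c i ≤ θ := hc (by simpa [Fin.le_def] using him)
    have h1t : 0 ≤ 1 - t i := by linarith [ht1 i]
    nlinarith
  have h2 : ∑ i ∈ Fᶜ, θ * t i ≤ ∑ i ∈ Fᶜ, c i * t i := by
    apply Finset.sum_le_sum
    intro i hi
    have hnm : ¬ m ≤ (i : ℕ) := by
      have := Finset.mem_compl.mp hi
      simpa [hF] using this
    have hci : θ ≤ c i := hc (by simp [Fin.le_def]; omega)
    nlinarith [ht0 i]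
  have hcard : (F.card : ℝ) = ((n - m : ℕ) : ℝ) := by rw [hF, card_filter_ge]
  have hsplit : ∑ i ∈ F, t i + ∑ i ∈ Fᶜ, t i = ∑ i, t i := Finset.sum_add_sum_compl F t
  have h3 : ∑ i ∈ F, θ * (1 - t i) ≤ ∑ i ∈ Fᶜ, θ * t i := by
    rw [← Finset.mul_sum, ← Finset.mul_sum]
    apply mul_le_mul_of_nonneg_left _ hθ0
    have e1 : ∑ i ∈ F, (1 - t i) = F.card - ∑ i ∈ F, t i := by
      rw [Finset.sum_sub_distrib]; simp
    rw [e1]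
    rw [hcard]
    linarith
  have h4 : ∑ i ∈ F, (c i - c i * t i) ≤ ∑ i ∈ Fᶜ, c i * t i := le_trans h1 (le_trans h3 h2)
  have e2 : ∑ i ∈ F, (c i - c i * t i) = ∑ i ∈ F, c i - ∑ i ∈ F, c i * t i :=
    Finset.sum_sub_distrib _ _
  have hsplit2 : ∑ i ∈ F, c i * t i + ∑ i ∈ Fᶜ, c i * t i = ∑ i, c i * t i :=
    Finset.sum_add_sum_compl F _
  linarith

set_option maxHeartbeats 2000000 in
theorem stmt_7 {n m : ℕ} (hmn : m < n)
    (P₀ : Matrix (Fin n) (Fin n) ℝ) (hP₀ : P₀.PosSemidef)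
    (σ : Fin n → ℝ) (hσ : Antitone σ) (hσ0 : ∀ i : Fin n, 0 ≤ σ i)
    (u : Fin n → Fin n → ℝ)
    (hortho : ∀ i j, u i ⬝ᵥ u j = if i = j then (1 : ℝ) else 0)
    (heig : ∀ i, P₀ *ᵥ u i = σ i • u i)
    (H : Matrix (Fin m) (Fin n) ℝ) (hinv : IsUnit (H * P₀ * Hᵀ)) :
    ∑ i ∈ Finset.univ.filter (fun i : Fin n => m ≤ (i : ℕ)), (σ i) ^ 2 ≤
      Matrix.trace ((P₀ - P₀ * Hᵀ * (H * P₀ * Hᵀ)⁻¹ * H * P₀)ᵀ *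
        (P₀ - P₀ * Hᵀ * (H * P₀ * Hᵀ)⁻¹ * H * P₀)) := by
  classical
  set A : Matrix (Fin n) (Fin n) ℝ :=
    P₀ - P₀ * Hᵀ * (H * P₀ * Hᵀ)⁻¹ * H * P₀ with hAdef
  -- kernel of H * P₀
  let T := Matrix.toEuclideanLin (H * P₀)
  let K := LinearMap.ker T
  let k := Module.finrank ℝ K
  have hk : n - m ≤ k := by
    have h1 : Module.finrank ℝ (LinearMap.range T) + k = n := by
      rw [LinearMap.finrank_range_add_finrank_ker]
      simp [finrank_euclideanSpace]
    have h2 : Module.finrank ℝ (LinearMap.range T) ≤ m := by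
      have := Submodule.finrank_le (LinearMap.range T)
      simpa [finrank_euclideanSpace] using this
    omega
  let b := stdOrthonormalBasis ℝ K
  let v : Fin k → (Fin n → ℝ) := fun j r => (b j : EuclideanSpace ℝ (Fin n)) r
  have hv_ortho : ∀ i j, v i ⬝ᵥ v j = if i = j then (1:ℝ) else 0 := by
    intro i j
    have h := b.orthonormal
    rw [orthonormal_iff_ite] at h
    have h2 := h i j
    rw [Submodule.coe_inner, PiLp.inner_apply] at h2
    simp only [RCLike.inner_apply, conj_trivial] at h2
    simp only [dotProduct, v]; rw [← h2]; exact Finset.sum_congr rfl fun x _ => mul_comm _ _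
  have hv_ker : ∀ j, (H * P₀) *ᵥ v j = 0 := by
    intro j
    have hmem : T (b j : EuclideanSpace ℝ (Fin n)) = 0 := (b j).2
    rw [Matrix.toEuclideanLin_apply] at hmem
    have h3 := congrArg (WithLp.equiv 2 (Fin m → ℝ)) hmem
    simp at h3
    exact h3
  -- A acts like P₀ on kernel vectors
  have hAv : ∀ j, A *ᵥ v j = P₀ *ᵥ v j := by
    intro j
    have hfac : P₀ * Hᵀ * (H * P₀ * Hᵀ)⁻¹ * H * P₀
        = (P₀ * Hᵀ * (H * P₀ * Hᵀ)⁻¹) * (H * P₀) := by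
      simp only [Matrix.mul_assoc]
    rw [hAdef, Matrix.sub_mulVec, hfac, ← Matrix.mulVec_mulVec, hv_ker,
      Matrix.mulVec_zero, sub_zero]
  -- the matrix with columns v j
  set W : Matrix (Fin n) (Fin k) ℝ := Matrix.of fun r j => v j r with hWdef
  have hWt : Wᵀ * W = 1 := by
    ext i j
    have h := hv_ortho i j
    simpa [Matrix.mul_apply, Matrix.one_apply, dotProduct, hWdef] using h
  have hQ : (W * Wᵀ) * (W * Wᵀ) = W * Wᵀ := by
    calc W * Wᵀ * (W * Wᵀ) = W * (Wᵀ * W) * Wᵀ := by simp only [Matrix.mul_assoc]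
    _ = W * Wᵀ := by rw [hWt, Matrix.mul_one]
  have hS : (1 - W * Wᵀ).PosSemidef := by
    have h := Matrix.posSemidef_conjTranspose_mul_self (1 - W * Wᵀ)
    have hSsym : (1 - W * Wᵀ)ᵀ = 1 - W * Wᵀ := by
      simp [Matrix.transpose_sub, Matrix.transpose_mul]
    have e : (1 - W * Wᵀ)ᴴ * (1 - W * Wᵀ) = 1 - W * Wᵀ := by
      rw [Matrix.conjTranspose_eq_transpose_of_trivial, hSsym]
      calc (1 - W * Wᵀ) * (1 - W * Wᵀ)
          = 1 - W * Wᵀ - W * Wᵀ + (W * Wᵀ) * (W * Wᵀ) := by noncomm_ring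
      _ = 1 - W * Wᵀ := by rw [hQ]; noncomm_ring
    rwa [e] at h
  -- the eigenvector matrix
  set U : Matrix (Fin n) (Fin n) ℝ := Matrix.of u with hUdef
  have hUU : U * Uᵀ = 1 := by
    ext i j
    have h := hortho i j
    simpa [Matrix.mul_apply, Matrix.one_apply, dotProduct, hUdef] using h
  have hU'U : Uᵀ * U = 1 := mul_eq_one_comm.mp hUU
  have hPt : P₀ᵀ = P₀ := by
    have h := hP₀.1.eq
    rwa [Matrix.conjTranspose_eq_transpose_of_trivial] at h
  have hPU : P₀ * Uᵀ = Uᵀ * Matrix.diagonal σ := by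
    ext i j
    have h := congrFun (heig j) i
    simp only [Matrix.mulVec, dotProduct, Pi.smul_apply, smul_eq_mul] at h
    have hrhs : (Uᵀ * Matrix.diagonal σ) i j = u j i * σ j := by
      rw [Matrix.mul_diagonal]; rfl
    have hlhs : (P₀ * Uᵀ) i j = ∑ x, P₀ i x * u j x := by
      rw [Matrix.mul_apply]; rfl
    rw [hrhs, hlhs]
    exact h.trans (mul_comm _ _)
  have hPdec : P₀ = Uᵀ * Matrix.diagonal σ * U := by
    calc P₀ = P₀ * (Uᵀ * U) := by rw [hU'U, Matrix.mul_one]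
    _ = P₀ * Uᵀ * U := by rw [Matrix.mul_assoc]
    _ = Uᵀ * Matrix.diagonal σ * U := by rw [hPU]
  -- quadratic form of P₀²
  have hquad : ∀ x : Fin n → ℝ,
      (P₀ *ᵥ x) ⬝ᵥ (P₀ *ᵥ x) = ∑ i, σ i ^ 2 * (u i ⬝ᵥ x) ^ 2 := by
    intro x
    have hx : P₀ *ᵥ x = Uᵀ *ᵥ (Matrix.diagonal σ *ᵥ (U *ᵥ x)) := by
      rw [Matrix.mulVec_mulVec, Matrix.mulVec_mulVec, ← hPdec]
    rw [hx, iso_dot (by rw [Matrix.transpose_transpose, hUU])]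
    rw [dotProduct]
    apply Finset.sum_congr rfl
    intro i _
    rw [Matrix.mulVec_diagonal]
    have e : (U *ᵥ x) i = u i ⬝ᵥ x := rfl
    rw [e]; ring
  -- Parseval
  have hpar : ∀ x : Fin n → ℝ, ∑ i, (u i ⬝ᵥ x) ^ 2 = x ⬝ᵥ x := by
    intro x
    have h := iso_dot hU'U x x
    rw [← h, dotProduct]
    apply Finset.sum_congr rfl
    intro i _
    have e : (U *ᵥ x) i = u i ⬝ᵥ x := rfl
    rw [e]; ring
  -- the weights t i
  have htW : ∀ i, u i ⬝ᵥ ((W * Wᵀ) *ᵥ u i) = ∑ j, (u i ⬝ᵥ v j) ^ 2 := by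
    intro i
    rw [← Matrix.mulVec_mulVec, Matrix.dotProduct_mulVec]
    have e1 : u i ᵥ* W = Wᵀ *ᵥ u i := (Matrix.mulVec_transpose W (u i)).symm
    rw [e1, dotProduct]
    apply Finset.sum_congr rfl
    intro j _
    have e2 : (Wᵀ *ᵥ u i) j = v j ⬝ᵥ u i := rfl
    rw [e2, dotProduct_comm]
    ring
  have ht1 : ∀ i, (∑ j, (u i ⬝ᵥ v j) ^ 2) ≤ 1 := by
    intro i
    have h := hS.dotProduct_mulVec_nonneg (u i)
    simp only [star_trivial] at h
    rw [Matrix.sub_mulVec, Matrix.one_mulVec, dotProduct_sub, htW i] at h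
    have huu : u i ⬝ᵥ u i = 1 := by simpa using hortho i i
    rw [huu] at h
    linarith
  have ht0 : ∀ i : Fin n, 0 ≤ ∑ j, (u i ⬝ᵥ v j) ^ 2 :=
    fun i => Finset.sum_nonneg fun j _ => sq_nonneg _
  have hsum_t : ∑ i, ∑ j, (u i ⬝ᵥ v j) ^ 2 = (k : ℝ) := by
    rw [Finset.sum_comm]
    have e2 : ∀ j : Fin k, ∑ i, (u i ⬝ᵥ v j) ^ 2 = 1 := by
      intro j
      rw [hpar (v j)]
      simpa using hv_ortho j j
    rw [Finset.sum_congr rfl (fun j _ => e2 j)]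
    simp
  -- the trace inequality
  have hAA : (Aᵀ * A).PosSemidef := by
    have h := Matrix.posSemidef_conjTranspose_mul_self A
    rwa [Matrix.conjTranspose_eq_transpose_of_trivial] at h
  have hAW : ∀ (r : Fin n) (j : Fin k), (A * W) r j = (A *ᵥ v j) r := by
    intro r j
    rw [Matrix.mul_apply]
    rfl
  have htr : ((Aᵀ * A) * (W * Wᵀ)).trace = ∑ j, (A *ᵥ v j) ⬝ᵥ (A *ᵥ v j) := by
    rw [← Matrix.mul_assoc, Matrix.trace_mul_comm]
    have e : Wᵀ * (Aᵀ * A * W) = (A * W)ᵀ * (A * W) := by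
      rw [Matrix.transpose_mul]
      simp only [Matrix.mul_assoc]
    rw [e, Matrix.trace]
    apply Finset.sum_congr rfl
    intro j _
    have e3 : ((A * W)ᵀ * (A * W)).diag j = ∑ r, (A * W) r j * (A * W) r j := by
      rw [Matrix.diag_apply, Matrix.mul_apply]
      rfl
    rw [e3, dotProduct]
    apply Finset.sum_congr rfl
    intro r _
    rw [hAW r j]
  have hmain : ∑ j, (A *ᵥ v j) ⬝ᵥ (A *ᵥ v j) ≤ (Aᵀ * A).trace := by
    have h0 : 0 ≤ ((Aᵀ * A) * (1 - W * Wᵀ)).trace := trace_mul_psd_nonneg hAA hS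
    have hsplit : (Aᵀ * A).trace
        = ((Aᵀ * A) * (W * Wᵀ)).trace + ((Aᵀ * A) * (1 - W * Wᵀ)).trace := by
      rw [← Matrix.trace_add, ← Matrix.mul_add]
      simp
    rw [← htr]
    linarith
  -- put everything together
  have hc : Antitone (fun i : Fin n => σ i ^ 2) := by
    intro i j hij
    exact pow_le_pow_left₀ (hσ0 j) (hσ hij) 2
  have hsum' : ((n - m : ℕ) : ℝ) ≤ ∑ i, ∑ j, (u i ⬝ᵥ v j) ^ 2 := by
    rw [hsum_t]
    exact_mod_cast hk
  calc ∑ i ∈ Finset.univ.filter (fun i : Fin n => m ≤ (i : ℕ)), σ i ^ 2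
      ≤ ∑ i, σ i ^ 2 * (∑ j, (u i ⬝ᵥ v j) ^ 2) :=
        aux_sum_bound hmn _ _ hc (fun i => sq_nonneg _) ht0 ht1 hsum'
  _ = ∑ j, ∑ i, σ i ^ 2 * (u i ⬝ᵥ v j) ^ 2 := by
      rw [← Finset.sum_comm]
      apply Finset.sum_congr rfl
      intro i _
      rw [Finset.mul_sum]
  _ = ∑ j, (P₀ *ᵥ v j) ⬝ᵥ (P₀ *ᵥ v j) := by
      apply Finset.sum_congr rfl
      intro j _
      rw [hquad (v j)]
  _ = ∑ j, (A *ᵥ v j) ⬝ᵥ (A *ᵥ v j) := by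
      apply Finset.sum_congr rfl
      intro j _
      rw [hAv j]
  _ ≤ (Aᵀ * A).trace := hmain
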